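/- For any associative algebra A over F, a ∈ A, integers h, i, j, and x, y ∈ A: (ad_h a)(xy) = q^{h-i} ((ad_i a)(x)) y + q^{j-h} x ((ad_j a)(y)) + q^{j-i}(q^{h-i-j} - q^{i+j-h}) x a y. -/
import Mathlib


open Finset

variable {F : Type*} [Field F] {A : Type*} [Ring A] [Algebra F A]

/-- The quantum adjoint map `ad_r a : x ↦ q^r a x - q^{-r} x a`. -/
noncomputable def qad (q : F) (a : A) (r : ℤ) (x : A) : A :=
  q ^ r • (a * x) - q ^ (-r) • (x * a)

/-- `bad_m a` : the balanced version of `ad`. -/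
noncomputable def bad (q : F) (a : A) : ℕ → A → A
  | 0, x => (q - q⁻¹)⁻¹ • qad q a 0 x
  | (m + 1), x =>
      (((q ^ (2 * (m + 1) : ℤ) - q ^ (-(2 * (m + 1)) : ℤ)) *
          (q ^ (2 * (m + 1) + 1 : ℤ) - q ^ (-(2 * (m + 1)) - 1 : ℤ)))⁻¹) •
        ((q ^ (2 * (m + 1) : ℤ) - q ^ (-(2 * (m + 1)) : ℤ)) ^ 2 • x +
          qad q a ((m : ℤ) + 1) (qad q a (-((m : ℤ) + 1)) x))

/-- `(bad a)_m = bad_{m-1} a ∘ ⋯ ∘ bad_0 a`, with `(bad a)_0 = id`. -/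
noncomputable def badProd (q : F) (a : A) : ℕ → A → A
  | 0 => id
  | (m + 1) => bad q a m ∘ badProd q a m

/-- `S_m = (bad a)_m ∘ (ad_m a) / (q^{2m} - q^{-2m})`, with `S_0 = id`. -/
noncomputable def Smap (q : F) (a : A) : ℕ → A → A
  | 0 => id
  | (m + 1) => fun x =>
      (q ^ (2 * (m + 1) : ℤ) - q ^ (-(2 * (m + 1)) : ℤ))⁻¹ •
        badProd q a (m + 1) (qad q a ((m : ℤ) + 1) x)

/-- `S'_m = (bad a)_m ∘ (ad_{-m} a) / (q^{2m} - q^{-2m})`, with `S'_0 = id`. -/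
noncomputable def Smap' (q : F) (a : A) : ℕ → A → A
  | 0 => id
  | (m + 1) => fun x =>
      (q ^ (2 * (m + 1) : ℤ) - q ^ (-(2 * (m + 1)) : ℤ))⁻¹ •
        badProd q a (m + 1) (qad q a (-((m : ℤ) + 1)) x)

theorem stmt2 (q : F) (hq : q ≠ 0) (hroot : ∀ n : ℕ, 0 < n → q ^ n ≠ 1) (a : A) (h i j : ℤ) (x y : A) :
    qad q a h (x * y) =
      q ^ (h - i) • (qad q a i x * y) + q ^ (j - h) • (x * qad q a j y) +
        (q ^ (j - i) * (q ^ (h - i - j) - q ^ (i + j - h))) • (x * a * y) := by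
  simp only [qad, smul_sub, sub_mul, mul_sub, smul_mul_assoc, mul_smul_comm, mul_assoc]
  match_scalars <;> simp [← zpow_neg, ← zpow_add₀ hq, ← zpow_sub₀ hq] <;> ring_nf
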